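/- Let G1 be an r1-regular graph with n1 vertices (r1 ≥ 1) and G2 an r2-regular graph (r2 ≥ 1), G3 an r3-regular graph (r3 ≥ 1), and let 𝒢 = G1^S ⋈ (G2^V ∪ G3^E). If μ ≠ 0 is an eigenvalue of 𝓛(G2) with multiplicity k, then (r1 + r2·μ)/(r1 + r2) is an eigenvalue of 𝓛(𝒢) with multiplicity at least n1·k (equivalently, ((X − (r1+r2·μ)/(r1+r2))^{n1·k} divides the characteristic polynomial of 𝓛(𝒢)). -/

import Mathlib

open Matrix Polynomial BigOperators Kronecker

namespace NLS

variable {V : Type*}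

/-- Adjacency matrix over `ℝ` (classical decidability). -/
noncomputable def adjMat (G : SimpleGraph V) : Matrix V V ℝ :=
  letI := Classical.decRel G.Adj
  G.adjMatrix ℝ

/-- Degree of a vertex (classical decidability). -/
noncomputable def deg [Fintype V] (G : SimpleGraph V) (v : V) : ℕ :=
  letI := Classical.decRel G.Adj
  G.degree v

/-- The normalized Laplacian `I - D^{-1/2} A D^{-1/2}`. -/
noncomputable def normLap [Fintype V] (G : SimpleGraph V) : Matrix V V ℝ :=
  letI := Classical.decEq V
  1 - (Matrix.diagonal fun v => (Real.sqrt (deg G v))⁻¹) * adjMat G *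
      (Matrix.diagonal fun v => (Real.sqrt (deg G v))⁻¹)

/-- `G` is `r`-regular. -/
def IsReg [Fintype V] (G : SimpleGraph V) (r : ℕ) : Prop := ∀ v, deg G v = r

/-- Vertex-edge incidence matrix over `ℝ`. -/
def incMat [DecidableEq V] (G : SimpleGraph V) : Matrix V G.edgeSet ℝ :=
  Matrix.of fun v e => if v ∈ (e : Sym2 V) then 1 else 0

/-- The number of spanning trees of `G`. -/
noncomputable def numSpanningTrees [Fintype V] (G : SimpleGraph V) : ℕ :=
  Nat.card {H : SimpleGraph V // H ≤ G ∧ H.IsTree}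

section SpectralAux
variable {n : Type*} [Fintype n] [DecidableEq n]

lemma charpoly_similar (M D P Q : Matrix n n ℝ) (hPQ : P * Q = 1) (hM : M = P * D * Q) :
    M.charpoly = D.charpoly := by
  have hmap : (P.map (C : ℝ →+* ℝ[X])) * (Q.map (C : ℝ →+* ℝ[X])) = 1 := by
    rw [← Matrix.map_mul, hPQ]
    exact Matrix.map_one _ (map_zero _) (map_one _)
  have hcm : M.charmatrix = P.map C * D.charmatrix * Q.map C := by
    rw [charmatrix, charmatrix, hM]
    rw [Matrix.mul_sub, Matrix.sub_mul]
    congr 1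
    · rw [scalar_apply, ← Matrix.smul_one_eq_diagonal, mul_smul_comm, smul_mul_assoc, mul_one, hmap]
    · simp only [RingHom.mapMatrix_apply, Matrix.map_mul]
  unfold Matrix.charpoly
  rw [hcm, det_mul, det_mul, mul_comm (det _), mul_assoc, ← det_mul, hmap, det_one, mul_one]

lemma charpoly_diagonal (d : n → ℝ) :
    (Matrix.diagonal d).charpoly = ∏ i, (X - C (d i)) := by
  unfold Matrix.charpoly
  rw [charmatrix, scalar_apply, RingHom.mapMatrix_apply, Matrix.diagonal_map (map_zero _),
    Matrix.diagonal_sub, det_diagonal]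

lemma charpoly_hermitian (A : Matrix n n ℝ) (hA : A.IsHermitian) :
    A.charpoly = ∏ i, (X - C (hA.eigenvalues i)) := by
  have hst := hA.spectral_theorem
  have h1 : (hA.eigenvectorUnitary : Matrix n n ℝ) * (star hA.eigenvectorUnitary : Matrix n n ℝ) = 1 := by
    exact (Unitary.mem_iff.mp hA.eigenvectorUnitary.prop).2
  have : (RCLike.ofReal ∘ hA.eigenvalues : n → ℝ) = hA.eigenvalues := by
    funext i; simp
  rw [charpoly_similar A (Matrix.diagonal hA.eigenvalues) _ _ h1 (by rw [← this]; exact hst),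
    charpoly_diagonal]

lemma count_ge_of_pow_dvd {A : Matrix n n ℝ} (hA : A.IsHermitian) {μ : ℝ} {k : ℕ}
    (h : (X - C μ) ^ k ∣ A.charpoly) :
    k ≤ (Finset.univ.filter fun i => hA.eigenvalues i = μ).card := by
  classical
  have hP : A.charpoly ≠ 0 := A.charpoly_monic.ne_zero
  have hk : k ≤ rootMultiplicity μ A.charpoly := (Polynomial.le_rootMultiplicity_iff hP).mpr h
  have hroots : A.charpoly.roots = Finset.univ.val.map hA.eigenvalues := by
    rw [charpoly_hermitian A hA]
    have : ∏ i, (X - C (hA.eigenvalues i)) =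
        ((Finset.univ.val.map hA.eigenvalues).map fun a => X - C a).prod := by
      rw [Multiset.map_map]; rfl
    rw [this, Polynomial.roots_multiset_prod_X_sub_C]
  rw [← Polynomial.count_roots, hroots, Multiset.count_map] at hk
  refine hk.trans (le_of_eq ?_)
  rw [show (Finset.univ.filter fun i => hA.eigenvalues i = μ)
      = Finset.univ.filter (fun i => μ = hA.eigenvalues i) from by ext i; simp [eq_comm]]
  rw [Finset.card, Finset.filter_val]

lemma pow_dvd_charpoly_of_eigvecs {A : Matrix n n ℝ} (hA : A.IsHermitian) {μ : ℝ}
    {ι : Type*} [Fintype ι]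
    (v : ι → n → ℝ) (hli : LinearIndependent ℝ v) (hv : ∀ j, A *ᵥ v j = μ • v j) :
    (X - C μ) ^ (Fintype.card ι) ∣ A.charpoly := by
  classical
  set s := Finset.univ.filter (fun i => hA.eigenvalues i = μ) with hs
  suffices hms : Fintype.card ι ≤ s.card by
    rw [charpoly_hermitian A hA, ← Finset.prod_filter_mul_prod_filter_not Finset.univ
      (fun i => hA.eigenvalues i = μ)]
    have hps : ∏ i ∈ s, (X - C (hA.eigenvalues i)) = (X - C μ) ^ s.card := by
      rw [Finset.prod_congr rfl (fun i hi => by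
        rw [(Finset.mem_filter.mp hi).2]), Finset.prod_const]
    rw [← hs, hps]
    exact Dvd.dvd.mul_right (pow_dvd_pow _ hms) _
  let e := WithLp.linearEquiv 2 ℝ (n → ℝ)
  let b : Module.Basis n ℝ (n → ℝ) := hA.eigenvectorBasis.toBasis.map e
  have hb : ∀ i, A *ᵥ b i = hA.eigenvalues i • b i := by
    intro i
    have := hA.mulVec_eigenvectorBasis i
    exact this
  let E : Submodule ℝ (n → ℝ) := LinearMap.ker (Matrix.mulVecLin A - μ • LinearMap.id)
  have hmem : ∀ x, x ∈ E ↔ A *ᵥ x = μ • x := by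
    intro x
    simp [E, LinearMap.mem_ker, sub_eq_zero, Matrix.mulVecLin_apply]
  have hfr1 : Fintype.card ι ≤ Module.finrank ℝ E := by
    let w : ι → E := fun j => ⟨v j, (hmem _).mpr (hv j)⟩
    have hw : LinearIndependent ℝ w := LinearIndependent.of_comp E.subtype hli
    simpa using hw.fintype_card_le_finrank
  have hE : E ≤ Submodule.span ℝ (b '' ↑s) := by
    intro x hx
    have hx' : A *ᵥ x = μ • x := (hmem x).mp hx
    set c : n → ℝ := fun j => b.repr x j with hc
    have hxe : x = ∑ j, c j • b j := (b.sum_repr x).symm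
    have hall : ∀ j, (hA.eigenvalues j - μ) * c j = 0 := by
      have l1 : A *ᵥ x = ∑ j, (hA.eigenvalues j * c j) • b j := by
        conv_lhs => rw [hxe]
        rw [show (A *ᵥ ∑ j, c j • b j) = ∑ j, A *ᵥ (c j • b j) from
          map_sum A.mulVecLin _ _]
        refine Finset.sum_congr rfl fun j _ => ?_
        rw [Matrix.mulVec_smul, hb j, smul_smul, mul_comm]
      have l2 : μ • x = ∑ j, (μ * c j) • b j := by
        conv_lhs => rw [hxe]
        rw [Finset.smul_sum]
        exact Finset.sum_congr rfl fun j _ => by rw [smul_smul]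
      have hsum : ∑ j, ((hA.eigenvalues j - μ) * c j) • b j = 0 := by
        have : ∑ j, ((hA.eigenvalues j - μ) * c j) • b j
            = (∑ j, (hA.eigenvalues j * c j) • b j) - ∑ j, (μ * c j) • b j := by
          rw [← Finset.sum_sub_distrib]
          refine Finset.sum_congr rfl fun j _ => ?_
          rw [← sub_smul, sub_mul]
        rw [this, ← l1, ← l2, hx', sub_self]
      intro j
      exact Fintype.linearIndependent_iff.mp b.linearIndependent _ hsum j
    rw [hxe]
    refine Submodule.sum_mem _ fun j _ => ?_
    by_cases hj : j ∈ s
    · exact Submodule.smul_mem _ _ (Submodule.subset_span ⟨j, by simpa using hj, rfl⟩)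
    · have hj' : hA.eigenvalues j ≠ μ := by simpa [hs] using hj
      have : c j = 0 := by
        rcases mul_eq_zero.mp (hall j) with h | h
        · exact absurd (sub_eq_zero.mp h) hj'
        · exact h
      simp [this]
  have hfr2 : Module.finrank ℝ E ≤ s.card := by
    have h1 : Module.finrank ℝ (Submodule.span ℝ (b '' ↑s)) ≤ (s.image b).card := by
      rw [← Finset.coe_image]
      exact finrank_span_finset_le_card _
    exact le_trans (Submodule.finrank_mono hE) (h1.trans Finset.card_image_le)
  omega

lemma exists_eigvecs {A : Matrix n n ℝ} (hA : A.IsHermitian) {μ : ℝ} {k : ℕ}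
    (h : (X - C μ) ^ k ∣ A.charpoly) :
    ∃ v : Fin k → n → ℝ, LinearIndependent ℝ v ∧ ∀ j, A *ᵥ v j = μ • v j := by
  classical
  have hk := count_ge_of_pow_dvd hA h
  set s := Finset.univ.filter (fun i => hA.eigenvalues i = μ) with hs
  let g : Fin k → n := fun j => (s.equivFin.symm (Fin.castLE hk j) : {x // x ∈ s})
  have hginj : Function.Injective g := by
    intro a b hab
    have h2 := s.equivFin.symm.injective (Subtype.ext hab)
    exact Fin.castLE_injective _ h2
  have hgs : ∀ j, hA.eigenvalues (g j) = μ := fun j =>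
    (Finset.mem_filter.mp (s.equivFin.symm (Fin.castLE hk j)).2).2
  let e := WithLp.linearEquiv 2 ℝ (n → ℝ)
  refine ⟨fun j => e (hA.eigenvectorBasis (g j)), ?_, ?_⟩
  · have h1 : LinearIndependent ℝ ((fun i => hA.eigenvectorBasis.toBasis i) ∘ g) :=
      hA.eigenvectorBasis.toBasis.linearIndependent.comp g hginj
    exact (h1.map' e.toLinearMap e.ker : _)
  · intro j
    have h3 := hA.mulVec_eigenvectorBasis (g j)
    rw [hgs j] at h3
    exact h3

end SpectralAux

section GraphAux


lemma adjMat_apply (G : SimpleGraph V) (v w : V) [Decidable (G.Adj v w)] :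
    adjMat G v w = if G.Adj v w then 1 else 0 := by
  unfold adjMat
  letI := Classical.decRel G.Adj
  rw [SimpleGraph.adjMatrix_apply]
  congr

lemma adjMat_transpose (G : SimpleGraph V) : (adjMat G)ᵀ = adjMat G := by
  classical
  ext i j
  rw [Matrix.transpose_apply, adjMat_apply, adjMat_apply]
  simp [SimpleGraph.adj_comm]

lemma normLap_isHermitian [Fintype V] (G : SimpleGraph V) : (normLap G).IsHermitian := by
  have ht : (normLap G)ᵀ = normLap G := by
    unfold normLap
    letI := Classical.decEq V
    rw [transpose_sub, transpose_one, transpose_mul, transpose_mul, diagonal_transpose, adjMat_transpose, ← mul_assoc]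
  ext i j
  rw [Matrix.conjTranspose_apply]
  rw [show star (normLap G j i) = normLap G j i from rfl]
  conv_lhs => rw [← ht]
  rw [Matrix.transpose_apply]

lemma deg_eq_card_filter [Fintype V] (G : SimpleGraph V) (v : V)
    [DecidablePred (G.Adj v)] :
    deg G v = (Finset.univ.filter (fun u => G.Adj v u)).card := by
  unfold deg
  letI := Classical.decRel G.Adj
  show (G.neighborFinset v).card = _
  congr 1
  ext w
  simp [SimpleGraph.mem_neighborFinset]

lemma mulVec_apply' {n : Type*} [Fintype n] (M : Matrix n n ℝ) (x : n → ℝ) (i : n) :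
    (M *ᵥ x) i = ∑ j, M i j * x j := rfl

lemma sum_adjMat_row [Fintype V] (G : SimpleGraph V) (v : V) :
    ∑ u, adjMat G v u = (deg G v : ℝ) := by
  classical
  rw [deg_eq_card_filter G v]
  rw [← Finset.sum_boole]
  refine Finset.sum_congr rfl fun u _ => ?_
  rw [adjMat_apply]

lemma normLap_mulVec_apply [Fintype V] (G : SimpleGraph V) (x : V → ℝ) (v : V) :
    (normLap G *ᵥ x) v
      = x v - (Real.sqrt (deg G v))⁻¹ *
          ∑ u, adjMat G v u * ((Real.sqrt (deg G u))⁻¹ * x u) := by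
  unfold normLap
  letI := Classical.decEq V
  rw [Matrix.sub_mulVec, Matrix.one_mulVec, Pi.sub_apply]
  congr 1
  rw [mulVec_apply', Finset.mul_sum]
  refine Finset.sum_congr rfl fun u _ => ?_
  rw [Matrix.mul_diagonal, Matrix.diagonal_mul]
  ring

lemma adjMat_mulVec_of_normLap [Fintype V] (G : SimpleGraph V) {r : ℕ} (hr : 1 ≤ r)
    (hreg : IsReg G r) {μ : ℝ} {y : V → ℝ} (hy : normLap G *ᵥ y = μ • y) :
    adjMat G *ᵥ y = ((r : ℝ) * (1 - μ)) • y := by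
  have hrpos : (0:ℝ) < r := by exact_mod_cast hr
  funext v
  have h := congrFun hy v
  rw [normLap_mulVec_apply] at h
  have hreg' : ∀ w, deg G w = r := hreg
  simp only [hreg'] at h
  have hfac : ∑ u, adjMat G v u * ((Real.sqrt r)⁻¹ * y u)
      = (Real.sqrt r)⁻¹ * (adjMat G *ᵥ y) v := by
    rw [mulVec_apply', Finset.mul_sum]
    exact Finset.sum_congr rfl fun u _ => by ring
  rw [hfac, ← mul_assoc, ← mul_inv, Real.mul_self_sqrt hrpos.le] at h
  have hPi : (μ • y) v = μ * y v := rfl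
  rw [hPi] at h
  show (adjMat G *ᵥ y) v = (r:ℝ) * (1 - μ) * y v
  have hrne : (r:ℝ) ≠ 0 := ne_of_gt hrpos
  field_simp at h
  nlinarith [h]

lemma sum_eig_zero [Fintype V] (G : SimpleGraph V) {r : ℕ} (hr : 1 ≤ r) (hreg : IsReg G r)
    {μ : ℝ} (hμ : μ ≠ 0) {y : V → ℝ} (hy : normLap G *ᵥ y = μ • y) : ∑ u, y u = 0 := by
  have hA := adjMat_mulVec_of_normLap G hr hreg hy
  have h1 : ∑ v, (adjMat G *ᵥ y) v = (r:ℝ) * ∑ u, y u := by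
    simp only [mulVec_apply']
    rw [Finset.sum_comm, Finset.mul_sum]
    refine Finset.sum_congr rfl fun u _ => ?_
    rw [← Finset.sum_mul]
    have hsym : ∀ v, adjMat G v u = adjMat G u v := fun v => by
      conv_lhs => rw [← adjMat_transpose G]
      rfl
    rw [Finset.sum_congr rfl fun v _ => hsym v, sum_adjMat_row, hreg u]
  rw [hA] at h1
  simp only [Pi.smul_apply, smul_eq_mul] at h1
  rw [← Finset.mul_sum] at h1
  have h2 : -((r:ℝ) * μ) * ∑ u, y u = 0 := by
    have : ((r:ℝ)*(1-μ) - r) * ∑ u, y u = 0 := by rw [sub_mul, h1, sub_self]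
    calc -((r:ℝ) * μ) * ∑ u, y u = ((r:ℝ)*(1-μ) - r) * ∑ u, y u := by ring
    _ = 0 := this
  have hrne : (r:ℝ) ≠ 0 := by exact_mod_cast Nat.one_le_iff_ne_zero.mp hr
  rcases mul_eq_zero.mp h2 with h | h
  · exact absurd h (by simp [hrne, hμ])
  · exact h

end GraphAux

section Corona

variable {V1 V2 V3 : Type*}

/-- Adjacency for the subdivision vertex-edge neighbourhood **vertex**-corona
`G1^S ⋈ (G2^V ∪ G3^E)`. Vertices: original `V1`, inserted `G1.edgeSet`,
copies of `G2` indexed by `V1`, copies of `G3` indexed by `G1.edgeSet`. -/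
def svevAdj (G1 : SimpleGraph V1) (G2 : SimpleGraph V2) (G3 : SimpleGraph V3) :
    (V1 ⊕ (G1.edgeSet ⊕ ((V1 × V2) ⊕ (G1.edgeSet × V3)))) →
    (V1 ⊕ (G1.edgeSet ⊕ ((V1 × V2) ⊕ (G1.edgeSet × V3)))) → Prop
  | .inl v, .inr (.inl e) => v ∈ (e : Sym2 V1)
  | .inr (.inl e), .inl v => v ∈ (e : Sym2 V1)
  | .inr (.inl e), .inr (.inr (.inl p)) => p.1 ∈ (e : Sym2 V1)
  | .inr (.inr (.inl p)), .inr (.inl e) => p.1 ∈ (e : Sym2 V1)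
  | .inr (.inl e), .inr (.inr (.inr q)) => q.1 = e
  | .inr (.inr (.inr q)), .inr (.inl e) => q.1 = e
  | .inr (.inr (.inl p)), .inr (.inr (.inl p')) => p.1 = p'.1 ∧ G2.Adj p.2 p'.2
  | .inr (.inr (.inr q)), .inr (.inr (.inr q')) => q.1 = q'.1 ∧ G3.Adj q.2 q'.2
  | _, _ => False

/-- The subdivision vertex-edge neighbourhood vertex-corona `G1^S ⋈ (G2^V ∪ G3^E)`. -/
def svev (G1 : SimpleGraph V1) (G2 : SimpleGraph V2) (G3 : SimpleGraph V3) :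
    SimpleGraph (V1 ⊕ (G1.edgeSet ⊕ ((V1 × V2) ⊕ (G1.edgeSet × V3)))) where
  Adj := svevAdj G1 G2 G3
  symm := by
    constructor
    rintro (v|e|p|q) (v'|e'|p'|q') h <;>
      first
        | exact h
        | exact ⟨h.1.symm, h.2.symm⟩
        | exact h.elim
  loopless := by
    constructor
    rintro (v|e|p|q) h
    · exact h
    · exact h
    · exact G2.loopless.irrefl _ h.2
    · exact G3.loopless.irrefl _ h.2

/-- Adjacency for the subdivision vertex-edge neighbourhood **edge**-corona
`G1^S ◊ (G2^V ∪ G3^E)`. Vertices: original `V1`, inserted `G1.edgeSet`,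
copies of `G2` indexed by `G1.edgeSet`, copies of `G3` indexed by `V1`. -/
def sveeAdj (G1 : SimpleGraph V1) (G2 : SimpleGraph V2) (G3 : SimpleGraph V3) :
    (V1 ⊕ (G1.edgeSet ⊕ ((G1.edgeSet × V2) ⊕ (V1 × V3)))) →
    (V1 ⊕ (G1.edgeSet ⊕ ((G1.edgeSet × V2) ⊕ (V1 × V3)))) → Prop
  | .inl v, .inr (.inl e) => v ∈ (e : Sym2 V1)
  | .inr (.inl e), .inl v => v ∈ (e : Sym2 V1)
  | .inl v, .inr (.inr (.inl p)) => v ∈ (p.1 : Sym2 V1)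
  | .inr (.inr (.inl p)), .inl v => v ∈ (p.1 : Sym2 V1)
  | .inl v, .inr (.inr (.inr q)) => q.1 = v
  | .inr (.inr (.inr q)), .inl v => q.1 = v
  | .inr (.inr (.inl p)), .inr (.inr (.inl p')) => p.1 = p'.1 ∧ G2.Adj p.2 p'.2
  | .inr (.inr (.inr q)), .inr (.inr (.inr q')) => q.1 = q'.1 ∧ G3.Adj q.2 q'.2
  | _, _ => False

/-- The subdivision vertex-edge neighbourhood edge-corona `G1^S ◊ (G2^V ∪ G3^E)`. -/
def svee (G1 : SimpleGraph V1) (G2 : SimpleGraph V2) (G3 : SimpleGraph V3) :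
    SimpleGraph (V1 ⊕ (G1.edgeSet ⊕ ((G1.edgeSet × V2) ⊕ (V1 × V3)))) where
  Adj := sveeAdj G1 G2 G3
  symm := by
    constructor
    rintro (v|e|p|q) (v'|e'|p'|q') h <;>
      first
        | exact h
        | exact ⟨h.1.symm, h.2.symm⟩
        | exact h.elim
  loopless := by
    constructor
    rintro (v|e|p|q) h
    · exact h
    · exact h
    · exact G2.loopless.irrefl _ h.2
    · exact G3.loopless.irrefl _ h.2

variable [Fintype V1] [DecidableEq V1] [Fintype V2] [DecidableEq V2]
  [Fintype V3] [DecidableEq V3]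
  (G1 : SimpleGraph V1) (G2 : SimpleGraph V2) (G3 : SimpleGraph V3) [Fintype G1.edgeSet]

lemma card_filter_mem_edge (i : V1) :
    (Finset.univ.filter (fun e : G1.edgeSet => i ∈ (e : Sym2 V1))).card = deg G1 i := by
  classical
  letI := Classical.decRel G1.Adj
  have e1 : {e : G1.edgeSet // i ∈ (e : Sym2 V1)} ≃ G1.incidenceSet i :=
    { toFun := fun x => ⟨x.1.1, x.1.2, x.2⟩
      invFun := fun x => ⟨⟨x.1, x.2.1⟩, x.2.2⟩
      left_inv := fun x => rfl
      right_inv := fun x => rfl }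
  unfold deg
  rw [← SimpleGraph.card_neighborSet_eq_degree]
  rw [← Fintype.card_subtype]
  exact Fintype.card_congr (e1.trans (G1.incidenceSetEquivNeighborSet i))

def copyNbhd (i : V1) (u : V2) :
    {w : V1 ⊕ (G1.edgeSet ⊕ ((V1 × V2) ⊕ (G1.edgeSet × V3))) //
        svevAdj G1 G2 G3 (Sum.inr (Sum.inr (Sum.inl (i, u)))) w}
      ≃ ({e : G1.edgeSet // i ∈ (e : Sym2 V1)} ⊕ {u' : V2 // G2.Adj u u'}) where
  toFun x := match x with
    | ⟨Sum.inl _, h⟩ => h.elim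
    | ⟨Sum.inr (Sum.inl e), h⟩ => Sum.inl ⟨e, h⟩
    | ⟨Sum.inr (Sum.inr (Sum.inl p)), h⟩ => Sum.inr ⟨p.2, h.2⟩
    | ⟨Sum.inr (Sum.inr (Sum.inr _)), h⟩ => h.elim
  invFun y := match y with
    | Sum.inl ⟨e, he⟩ => ⟨Sum.inr (Sum.inl e), he⟩
    | Sum.inr ⟨u', hu⟩ => ⟨Sum.inr (Sum.inr (Sum.inl (i, u'))), ⟨rfl, hu⟩⟩
  left_inv := by
    rintro ⟨(v|e|⟨p1,p2⟩|q), h⟩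
    · exact h.elim
    · rfl
    · obtain ⟨h1, h2⟩ := h
      cases h1
      rfl
    · exact h.elim
  right_inv := by
    rintro (⟨e, he⟩|⟨u', hu⟩) <;> rfl

lemma deg_svev_copy (i : V1) (u : V2) :
    deg (svev G1 G2 G3) (Sum.inr (Sum.inr (Sum.inl (i, u)))) = deg G1 i + deg G2 u := by
  classical
  letI := Classical.decRel (svev G1 G2 G3).Adj
  have hmain : deg (svev G1 G2 G3) (Sum.inr (Sum.inr (Sum.inl (i, u))))
      = Fintype.card ↥((svev G1 G2 G3).neighborSet (Sum.inr (Sum.inr (Sum.inl (i, u))))) := by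
    unfold deg
    rw [← SimpleGraph.card_neighborSet_eq_degree]
  rw [hmain]
  have hcard1 : Fintype.card {e : G1.edgeSet // i ∈ (e : Sym2 V1)} = deg G1 i := by
    rw [← card_filter_mem_edge G1 i]
    exact Fintype.card_subtype _
  have hcard2 : Fintype.card {u' : V2 // G2.Adj u u'} = deg G2 u := by
    letI := Classical.decRel G2.Adj
    unfold deg
    rw [← SimpleGraph.card_neighborSet_eq_degree]
    exact Fintype.card_congr (Equiv.refl _)
  rw [← hcard1, ← hcard2, ← Fintype.card_sum]
  exact Fintype.card_congr (copyNbhd G1 G2 G3 i u)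

def bigvec (G1 : SimpleGraph V1) (i : V1) (y : V2 → ℝ) :
    (V1 ⊕ (G1.edgeSet ⊕ ((V1 × V2) ⊕ (G1.edgeSet × V3)))) → ℝ
  | .inr (.inr (.inl p)) => if p.1 = i then y p.2 else 0
  | _ => 0

lemma svev_eigvec {r1 r2 : ℕ} (hr1 : 1 ≤ r1) (hr2 : 1 ≤ r2)
    (h1 : IsReg G1 r1) (h2 : IsReg G2 r2) {μ : ℝ} (hμ : μ ≠ 0)
    {y : V2 → ℝ} (hy : normLap G2 *ᵥ y = μ • y) (i : V1) :
    normLap (svev G1 G2 G3) *ᵥ bigvec (V3 := V3) G1 i y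
      = (((r1 : ℝ) + r2 * μ) / ((r1 : ℝ) + r2)) • bigvec (V3 := V3) G1 i y := by
  classical
  have hA2 := adjMat_mulVec_of_normLap G2 hr2 h2 hy
  have hsum := sum_eig_zero G2 hr2 h2 hμ hy
  have hdeg : ∀ (a : V1) (b : V2),
      deg (svev G1 G2 G3) (Sum.inr (Sum.inr (Sum.inl (a, b)))) = r1 + r2 := fun a b => by
    rw [deg_svev_copy, h1 a, h2 b]
  have hr1pos : (0:ℝ) < (r1:ℝ) := by exact_mod_cast hr1
  have hr2pos : (0:ℝ) < (r2:ℝ) := by exact_mod_cast hr2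
  have hr12 : ((r1 : ℝ) + r2) ≠ 0 := by linarith
  set c : ℝ := (Real.sqrt ((r1 + r2 : ℕ) : ℝ))⁻¹ with hc
  have hcc : c * c = ((r1:ℝ) + r2)⁻¹ := by
    rw [hc, ← mul_inv, Real.mul_self_sqrt (by positivity)]
    push_cast
    ring_nf
  set lam : ℝ := ((r1 : ℝ) + r2 * μ) / ((r1 : ℝ) + r2) with hlam
  funext w
  rw [normLap_mulVec_apply]
  rw [Fintype.sum_sum_type, Fintype.sum_sum_type, Fintype.sum_sum_type]
  simp only [bigvec, mul_zero, Finset.sum_const_zero, zero_add, add_zero,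
    Fintype.sum_prod_type, hdeg, Pi.smul_apply, smul_eq_mul]
  rcases w with v | e | ⟨i0, u0⟩ | q
  · -- original vertex: everything vanishes
    have hz : ∀ a b, adjMat (svev G1 G2 G3) (Sum.inl v)
        (Sum.inr (Sum.inr (Sum.inl (a, b)))) = 0 := fun a b => by
      rw [adjMat_apply, if_neg]
      exact fun h => h
    simp only [hz, zero_mul, Finset.sum_const_zero, mul_zero, sub_zero]
  · -- inserted vertex
    have hS : ∀ a : V1, (∑ b : V2, adjMat (svev G1 G2 G3) (Sum.inr (Sum.inl e))
        (Sum.inr (Sum.inr (Sum.inl (a, b)))) * (c * if a = i then y b else 0)) = 0 := by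
      intro a
      by_cases ha : a = i
      · subst ha
        simp only [eq_self_iff_true, if_true]
        by_cases he : a ∈ (e : Sym2 V1)
        · have hk : ∀ b : V2, adjMat (svev G1 G2 G3) (Sum.inr (Sum.inl e))
              (Sum.inr (Sum.inr (Sum.inl (a, b)))) = 1 := fun b => by
            rw [adjMat_apply, if_pos]
            exact he
          simp only [hk, one_mul]
          rw [← Finset.mul_sum, hsum, mul_zero]
        · have hk : ∀ b : V2, adjMat (svev G1 G2 G3) (Sum.inr (Sum.inl e))
              (Sum.inr (Sum.inr (Sum.inl (a, b)))) = 0 := fun b => by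
            rw [adjMat_apply, if_neg]
            exact he
          simp only [hk, zero_mul, Finset.sum_const_zero]
      · simp [ha]
    rw [← hc]
    simp only [hS, Finset.sum_const_zero, mul_zero, sub_zero]
  · -- copy-of-G2 vertex
    by_cases hio : i0 = i
    · subst hio
      simp only [eq_self_iff_true, if_true]
      have hz : ∀ a ∈ (Finset.univ : Finset V1), a ≠ i0 →
          (∑ b : V2, adjMat (svev G1 G2 G3) (Sum.inr (Sum.inr (Sum.inl (i0, u0))))
            (Sum.inr (Sum.inr (Sum.inl (a, b)))) * (c * if a = i0 then y b else 0)) = 0 := by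
        intro a _ ha
        refine Finset.sum_eq_zero fun b _ => ?_
        have : adjMat (svev G1 G2 G3) (Sum.inr (Sum.inr (Sum.inl (i0, u0))))
            (Sum.inr (Sum.inr (Sum.inl (a, b)))) = 0 := by
          rw [adjMat_apply, if_neg]
          exact fun hcon => ha hcon.1.symm
        rw [this, zero_mul]
      rw [Finset.sum_eq_single i0 hz (fun h => absurd (Finset.mem_univ i0) h)]
      have hAv := congrFun hA2 u0
      rw [mulVec_apply'] at hAv
      simp only [Pi.smul_apply, smul_eq_mul] at hAv
      have hinner : (∑ b : V2, adjMat (svev G1 G2 G3) (Sum.inr (Sum.inr (Sum.inl (i0, u0))))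
          (Sum.inr (Sum.inr (Sum.inl (i0, b)))) * (c * if i0 = i0 then y b else 0))
          = c * ((r2:ℝ) * (1 - μ) * y u0) := by
        rw [← hAv, Finset.mul_sum]
        refine Finset.sum_congr rfl fun b _ => ?_
        simp only [eq_self_iff_true, if_true]
        by_cases hb : G2.Adj u0 b
        · rw [adjMat_apply, if_pos ⟨rfl, hb⟩, adjMat_apply, if_pos hb]
          ring
        · rw [adjMat_apply, if_neg (fun hcon => hb hcon.2), adjMat_apply, if_neg hb]
          ring
      rw [hinner, hdeg i0 u0, ← hc]
      have hstep : c * (c * ((r2:ℝ) * (1 - μ) * y u0))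
          = ((r1:ℝ)+r2)⁻¹ * ((r2:ℝ) * (1 - μ) * y u0) := by
        rw [← mul_assoc, hcc]
      rw [hstep, hlam]
      field_simp
      ring
    · simp only [if_neg hio]
      have hS : ∀ a : V1, (∑ b : V2, adjMat (svev G1 G2 G3)
          (Sum.inr (Sum.inr (Sum.inl (i0, u0))))
          (Sum.inr (Sum.inr (Sum.inl (a, b)))) * (c * if a = i then y b else 0)) = 0 := by
        intro a
        refine Finset.sum_eq_zero fun b _ => ?_
        by_cases ha : a = i
        · have : adjMat (svev G1 G2 G3) (Sum.inr (Sum.inr (Sum.inl (i0, u0))))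
              (Sum.inr (Sum.inr (Sum.inl (a, b)))) = 0 := by
            rw [adjMat_apply, if_neg]
            exact fun hcon => hio (hcon.1.trans ha)
          rw [this, zero_mul]
        · simp [ha]
      rw [← hc]
      simp only [hS, Finset.sum_const_zero, mul_zero, sub_zero]
  · -- copy-of-G3 vertex
    have hz : ∀ a b, adjMat (svev G1 G2 G3) (Sum.inr (Sum.inr (Sum.inr q)))
        (Sum.inr (Sum.inr (Sum.inl (a, b)))) = 0 := fun a b => by
      rw [adjMat_apply, if_neg]
      exact fun h => h
    simp only [hz, zero_mul, Finset.sum_const_zero, mul_zero, sub_zero]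


end Corona


theorem stmt_8 {V1 V2 V3 : Type*} [Fintype V1] [DecidableEq V1]
    [Fintype V2] [DecidableEq V2] [Fintype V3] [DecidableEq V3]
    (G1 : SimpleGraph V1) (G2 : SimpleGraph V2) (G3 : SimpleGraph V3)
    [Fintype G1.edgeSet]
    (r1 r2 r3 : ℕ) (hr1 : 1 ≤ r1) (hr2 : 1 ≤ r2) (hr3 : 1 ≤ r3)
    (h1 : IsReg G1 r1) (h2 : IsReg G2 r2) (h3 : IsReg G3 r3)
    (μ : ℝ) (hμ : μ ≠ 0) (k : ℕ)
    (hmult : (X - C μ) ^ k ∣ (normLap G2).charpoly) :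
    (X - C (((r1 : ℝ) + r2 * μ) / ((r1 : ℝ) + r2))) ^ (Fintype.card V1 * k) ∣
      (normLap (svev G1 G2 G3)).charpoly := by
  classical
  obtain ⟨yv, hli, heig⟩ := exists_eigvecs (normLap_isHermitian G2) hmult
  let F : V1 × Fin k → (V1 ⊕ (G1.edgeSet ⊕ ((V1 × V2) ⊕ (G1.edgeSet × V3)))) → ℝ :=
    fun p => bigvec (V3 := V3) G1 p.1 (yv p.2)
  have hFeig : ∀ p, normLap (svev G1 G2 G3) *ᵥ F p
      = (((r1:ℝ) + r2*μ)/((r1:ℝ)+r2)) • F p := fun p =>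
    svev_eigvec G1 G2 G3 hr1 hr2 h1 h2 hμ (heig p.2) p.1
  have hFli : LinearIndependent ℝ F := by
    rw [Fintype.linearIndependent_iff]
    rintro g hg ⟨i, j⟩
    have hcoord : ∀ u : V2, ∑ j' : Fin k, g (i, j') * yv j' u = 0 := by
      intro u
      have h0 := congrFun hg (Sum.inr (Sum.inr (Sum.inl (i, u))))
      rw [Finset.sum_apply] at h0
      simp only [Pi.smul_apply, smul_eq_mul] at h0
      rw [Fintype.sum_prod_type] at h0
      rw [Finset.sum_eq_single i (fun a _ ha => Finset.sum_eq_zero fun j' _ => by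
          simp only [F, bigvec]
          rw [if_neg (fun hh => ha hh.symm), mul_zero])
        (fun hno => absurd (Finset.mem_univ i) hno)] at h0
      simp only [F, bigvec, eq_self_iff_true, if_true] at h0
      rw [show (0:ℝ) = (0 : (V1 ⊕ (G1.edgeSet ⊕ ((V1 × V2) ⊕ (G1.edgeSet × V3)))) → ℝ)
        (Sum.inr (Sum.inr (Sum.inl (i, u)))) from rfl]
      exact h0
    have hz := Fintype.linearIndependent_iff.mp hli (fun j' => g (i, j')) ?_ j
    · exact hz
    · funext u
      rw [Finset.sum_apply]
      simp only [Pi.smul_apply, smul_eq_mul]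
      rw [show (0 : V2 → ℝ) u = 0 from rfl]
      exact hcoord u
  have hdvd := pow_dvd_charpoly_of_eigvecs (normLap_isHermitian (svev G1 G2 G3)) F hFli hFeig
  rwa [Fintype.card_prod, Fintype.card_fin] at hdvd

end NLS
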